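/- Let φ be a substitution on alphabet A, v a finite word over A, and m ≥ 1. Then the one-sided sequence v · φ^m(v) · φ^{2m}(v) · ⋯ is substitutive: it is the image under a coding of a fixed point of the substitution φ' on A ∪ {♠} defined by φ'(♠) = ♠v and φ'|_A = φ^m. -/

import Mathlib

/-- The extension of a substitution `φ : A → A*` to finite words, by concatenation. -/
def substWord {A : Type*} (φ : A → List A) (w : List A) : List A := w.flatMap φ

/-- The starting position in `φ(x)` of the image block `φ(x j)` of the `j`-th letter of a
one-sided sequence `x`. -/
def blockStartN {A : Type*} (φ : A → List A) (x : ℕ → A) (j : ℕ) : ℕ :=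
  ∑ t ∈ Finset.range j, (φ (x t)).length

open Classical in
/-- The extension of a substitution `φ` to one-sided sequences:
`φ(x₀x₁x₂…) = φ(x₀)φ(x₁)φ(x₂)…`. -/
noncomputable def substNgen {A : Type*} [Inhabited A] (φ : A → List A) (x : ℕ → A) :
    ℕ → A :=
  fun n =>
    if h : ∃ j : ℕ, blockStartN φ x j ≤ n ∧ n < blockStartN φ x (j + 1) then
      (φ (x h.choose)).getD (n - blockStartN φ x h.choose) default
    else default

/-- The shift `T^c` on one-sided sequences (`T` is the left shift). -/
def shiftN {A : Type*} (c : ℕ) (x : ℕ → A) : ℕ → A := fun n => x (n + c)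

/-- A finite word `u` is a prefix of the one-sided sequence `x`. -/
def isPrefixSeq {A : Type*} [Inhabited A] (u : List A) (x : ℕ → A) : Prop :=
  ∀ i : ℕ, i < u.length → u.getD i default = x i

/-- The substitution `φ'` on `A ∪ {♠}` (with `♠` encoded as `none`) defined by
`φ'(♠) = ♠v` and `φ'(a) = φ^m(a)` for `a ∈ A`. -/
def spadeSubst {A : Type*} (φ : A → List A) (v : List A) (m : ℕ) :
    Option A → List (Option A) :=
  fun o => o.elim (none :: v.map some) (fun a => ((substWord φ)^[m] [a]).map some)

section Aux

variable {A : Type*}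

lemma substWord_append (φ : A → List A) (a b : List A) :
    substWord φ (a ++ b) = substWord φ a ++ substWord φ b :=
  List.flatMap_append

lemma substWord_iter_append (φ : A → List A) (k : ℕ) (a b : List A) :
    (substWord φ)^[k] (a ++ b) = (substWord φ)^[k] a ++ (substWord φ)^[k] b := by
  induction k generalizing a b with
  | zero => simp
  | succ k ih => simp [Function.iterate_succ_apply, substWord_append, ih]

lemma substWord_ne_nil (φ : A → List A) (hne : ∀ a, φ a ≠ []) {l : List A} (hl : l ≠ []) :
    substWord φ l ≠ [] := by
  obtain ⟨a, t, rfl⟩ := List.exists_cons_of_ne_nil hl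
  simp [substWord, hne a]

lemma substWord_iter_ne_nil (φ : A → List A) (hne : ∀ a, φ a ≠ []) (k : ℕ) {l : List A}
    (hl : l ≠ []) : (substWord φ)^[k] l ≠ [] := by
  induction k generalizing l with
  | zero => simpa
  | succ k ih =>
    rw [Function.iterate_succ_apply]
    exact ih (substWord_ne_nil φ hne hl)

lemma substWord_iter_flatMap (φ : A → List A) (k : ℕ) {B : Type*} (l : List B)
    (f : B → List A) :
    (substWord φ)^[k] (l.flatMap f) = l.flatMap (fun b => (substWord φ)^[k] (f b)) := by
  induction l with
  | nil =>
    simp only [List.flatMap_nil]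
    induction k with
    | zero => rfl
    | succ k ih => rw [Function.iterate_succ_apply, show substWord φ [] = [] from rfl, ih]
  | cons a t ih => rw [List.flatMap_cons, substWord_iter_append, ih, List.flatMap_cons]

/-- The `j`-th block `φ^{jm}(v)`. -/
def blkL (φ : A → List A) (v : List A) (m j : ℕ) : List A := (substWord φ)^[j * m] v

/-- The concatenation `v φ^m(v) ⋯ φ^{(k-1)m}(v)`. -/
def LL (φ : A → List A) (v : List A) (m k : ℕ) : List A :=
  (List.range k).flatMap (blkL φ v m)

lemma LL_succ (φ : A → List A) (v : List A) (m k : ℕ) :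
    LL φ v m (k + 1) = LL φ v m k ++ blkL φ v m k := by
  rw [LL, List.range_succ, List.flatMap_append, List.flatMap_cons, List.flatMap_nil,
    List.append_nil]; rfl

lemma LL_succ' (φ : A → List A) (v : List A) (m k : ℕ) :
    LL φ v m (k + 1) = v ++ (substWord φ)^[m] (LL φ v m k) := by
  simp only [LL]
  rw [List.range_succ_eq_map, List.flatMap_cons, substWord_iter_flatMap,
    List.flatMap_map]
  congr 1
  · simp [blkL]
  · apply List.flatMap_congr
    intro j _
    show blkL φ v m (j + 1) = (substWord φ)^[m] (blkL φ v m j)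
    rw [blkL, blkL, Nat.succ_mul, Nat.add_comm, Function.iterate_add_apply]

lemma blkL_ne_nil (φ : A → List A) (hne : ∀ a, φ a ≠ []) {v : List A} (hv : v ≠ [])
    (m j : ℕ) : blkL φ v m j ≠ [] := substWord_iter_ne_nil φ hne _ hv

lemma le_length_LL (φ : A → List A) (hne : ∀ a, φ a ≠ []) {v : List A} (hv : v ≠ [])
    (m : ℕ) : ∀ k, k ≤ (LL φ v m k).length := by
  intro k
  induction k with
  | zero => simp
  | succ k ih =>
    rw [LL_succ, List.length_append]
    have : 1 ≤ (blkL φ v m k).length :=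
      List.length_pos_iff.mpr (blkL_ne_nil φ hne hv m k)
    omega

lemma LL_prefix (φ : A → List A) (v : List A) (m : ℕ) {j k : ℕ} (h : j ≤ k) :
    LL φ v m j <+: LL φ v m k := by
  induction k with
  | zero => simpa [Nat.le_zero.mp h]
  | succ k ih =>
    rcases Nat.lt_or_ge j (k + 1) with h' | h'
    · exact (ih (Nat.lt_succ_iff.mp h')).trans ⟨blkL φ v m k, (LL_succ φ v m k).symm⟩
    · have : j = k + 1 := le_antisymm h h'
      subst this; exact List.prefix_refl _

lemma getD_of_prefix [Inhabited A] {u t : List A} (h : u <+: t) {n : ℕ}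
    (hn : n < u.length) : t.getD n default = u.getD n default := by
  obtain ⟨c, hc⟩ := h
  rw [← hc, List.getD_append _ _ _ _ hn]

variable [Inhabited A]

/-- The sequence `w = v φ^m(v) φ^{2m}(v) ⋯`. -/
noncomputable def wseq (φ : A → List A) (v : List A) (m : ℕ) : ℕ → A :=
  fun n => (LL φ v m (n + 1)).getD n default

lemma wseq_spec (φ : A → List A) (hne : ∀ a, φ a ≠ []) {v : List A} (hv : v ≠ [])
    (m : ℕ) {n k : ℕ} (h : n < (LL φ v m k).length) :
    (LL φ v m k).getD n default = wseq φ v m n := by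
  have h1 : n < (LL φ v m (n + 1)).length := lt_of_lt_of_le (Nat.lt_succ_self n)
    (le_length_LL φ hne hv m (n + 1))
  rcases Nat.le_total (n + 1) k with h' | h'
  · rw [getD_of_prefix (LL_prefix φ v m h') h1]; rfl
  · rw [wseq, getD_of_prefix (LL_prefix φ v m h') h]

/-- The candidate fixed point `y = ♠ v φ^m(v) φ^{2m}(v) ⋯`. -/
noncomputable def yseq (φ : A → List A) (v : List A) (m : ℕ) : ℕ → Option A :=
  fun n => Nat.casesOn n none (fun k => some (wseq φ v m k))

end Aux

section Fixed

variable {B : Type*} [Inhabited B]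

lemma blockStartN_succ (ψ : B → List B) (x : ℕ → B) (j : ℕ) :
    blockStartN ψ x (j + 1) = blockStartN ψ x j + (ψ (x j)).length :=
  Finset.sum_range_succ _ _

lemma blockStartN_strictMono (ψ : B → List B) (x : ℕ → B) (hne : ∀ j, ψ (x j) ≠ []) :
    StrictMono (blockStartN ψ x) := by
  apply strictMono_nat_of_lt_succ
  intro j
  rw [blockStartN_succ]
  have : 0 < (ψ (x j)).length := List.length_pos_iff.mpr (hne j)
  omega

lemma length_flatMap_range (ψ : B → List B) (x : ℕ → B) (k : ℕ) :
    ((List.range k).flatMap (fun j => ψ (x j))).length = blockStartN ψ x k := by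
  induction k with
  | zero => rfl
  | succ k ih =>
    rw [List.range_succ, List.flatMap_append, List.length_append, ih, blockStartN_succ,
      List.flatMap_cons, List.flatMap_nil, List.append_nil]

/-- The general fixed-point criterion: if every finite concatenation
`ψ(x₀)ψ(x₁)⋯ψ(x_{k-1})` is a prefix of `x`, then `x` is a fixed point of `ψ`. -/
lemma substNgen_eq_self (ψ : B → List B) (x : ℕ → B) (hne : ∀ j, ψ (x j) ≠ [])
    (hpref : ∀ k, isPrefixSeq ((List.range k).flatMap (fun j => ψ (x j))) x) :
    substNgen ψ x = x := by
  classical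
  have hsm := blockStartN_strictMono ψ x hne
  have hzero : blockStartN ψ x 0 = 0 := rfl
  funext n
  have hex : ∃ j : ℕ, blockStartN ψ x j ≤ n ∧ n < blockStartN ψ x (j + 1) := by
    have h0 : blockStartN ψ x 0 ≤ n := by rw [hzero]; exact Nat.zero_le n
    have hj0 : blockStartN ψ x (Nat.findGreatest (fun j => blockStartN ψ x j ≤ n) n) ≤ n :=
      Nat.findGreatest_spec (P := fun j => blockStartN ψ x j ≤ n) (Nat.zero_le n) h0
    refine ⟨Nat.findGreatest (fun j => blockStartN ψ x j ≤ n) n, hj0, ?_⟩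
    by_contra hcon
    push_neg at hcon
    have hle : Nat.findGreatest (fun j => blockStartN ψ x j ≤ n) n + 1 ≤ n :=
      le_trans hsm.le_apply hcon
    exact Nat.findGreatest_is_greatest (Nat.lt_succ_self _) hle hcon
  rw [substNgen, dif_pos hex]
  obtain ⟨hj1, hj2⟩ := hex.choose_spec
  set j := hex.choose with hjdef
  have hsucc : blockStartN ψ x (j + 1) = blockStartN ψ x j + (ψ (x j)).length :=
    blockStartN_succ ψ x j
  have hlen : n - blockStartN ψ x j < (ψ (x j)).length := by omega
  have hlen2 : n < ((List.range (j + 1)).flatMap (fun t => ψ (x t))).length := by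
    rw [length_flatMap_range]; omega
  have key : (ψ (x j)).getD (n - blockStartN ψ x j) default
      = ((List.range (j + 1)).flatMap (fun t => ψ (x t))).getD n default := by
    rw [List.range_succ, List.flatMap_append, List.flatMap_cons, List.flatMap_nil,
      List.append_nil, List.getD_append_right _ _ _ _ (by rw [length_flatMap_range]; exact hj1),
      length_flatMap_range]
  rw [key, hpref (j + 1) n hlen2]

end Fixed

section Main

variable {A : Type*} [Inhabited A]

lemma substWord_iter_nil (φ : A → List A) (k : ℕ) : (substWord φ)^[k] ([] : List A) = [] := by
  induction k with
  | zero => rfl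
  | succ k ih => rw [Function.iterate_succ_apply, show substWord φ [] = [] from rfl, ih]

lemma P_eq_take (φ : A → List A) (hne : ∀ a, φ a ≠ []) {v : List A} (hv : v ≠ [])
    (m k : ℕ) :
    (List.range k).map (wseq φ v m) = (LL φ v m k).take k := by
  apply List.ext_getElem
  · rw [List.length_map, List.length_range, List.length_take,
      Nat.min_eq_left (le_length_LL φ hne hv m k)]
  · intro i h1 h2
    rw [List.getElem_map, List.getElem_range, List.getElem_take]
    have hi : i < (LL φ v m k).length := by
      rw [List.length_take] at h2; omega
    rw [← List.getD_eq_getElem _ default hi, wseq_spec φ hne hv m hi]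

lemma prefix_VP (φ : A → List A) (hne : ∀ a, φ a ≠ []) {v : List A} (hv : v ≠ [])
    (m k : ℕ) :
    v ++ (substWord φ)^[m] ((List.range k).map (wseq φ v m)) <+: LL φ v m (k + 1) := by
  rw [LL_succ']
  have h : (List.range k).map (wseq φ v m) <+: LL φ v m k := by
    rw [P_eq_take φ hne hv m k]; exact List.take_prefix _ _
  obtain ⟨c, hc⟩ := h
  exact ⟨(substWord φ)^[m] c, by rw [List.append_assoc, ← substWord_iter_append, hc]⟩

lemma M_eq (φ : A → List A) (v : List A) (m : ℕ) (k : ℕ) :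
    (List.range (k + 1)).flatMap (fun j => spadeSubst φ v m (yseq φ v m j))
      = none :: (v ++ (substWord φ)^[m] ((List.range k).map (wseq φ v m))).map some := by
  induction k with
  | zero =>
    simp [show List.range 1 = [0] from rfl, spadeSubst, yseq, substWord_iter_nil]
  | succ k ih =>
    rw [List.range_succ, List.flatMap_append, ih, List.flatMap_cons, List.flatMap_nil,
      List.append_nil]
    show _ ++ ((substWord φ)^[m] [wseq φ v m k]).map some = _
    simp [List.range_succ, List.map_append, substWord_iter_append, List.append_assoc]

theorem concat_powers_is_substitutive' {A : Type*} [Inhabited A] (φ : A → List A)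
    (hne : ∀ a, φ a ≠ []) (v : List A) (hv : v ≠ []) (m : ℕ) (hm : 1 ≤ m) :
    ∃ y : ℕ → Option A,
      y 0 = none ∧
      substNgen (spadeSubst φ v m) y = y ∧
      ∀ n : ℕ, (y (n + 1)).getD v.headI
        = ((List.range (n + 1)).flatMap (fun j => (substWord φ)^[j * m] v)).getD n default := by
  refine ⟨yseq φ v m, rfl, ?_, fun n => rfl⟩
  apply substNgen_eq_self
  · intro j
    cases j with
    | zero => exact List.cons_ne_nil _ _
    | succ k =>
      show ((substWord φ)^[m] [wseq φ v m k]).map some ≠ []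
      simp only [ne_eq, List.map_eq_nil_iff]
      exact substWord_iter_ne_nil φ hne m (List.cons_ne_nil _ _)
  · intro k
    cases k with
    | zero => intro i hi; simp at hi
    | succ k =>
      intro i hi
      rw [M_eq φ v m k] at hi ⊢
      set l := v ++ (substWord φ)^[m] ((List.range k).map (wseq φ v m)) with hl
      cases i with
      | zero => rfl
      | succ j =>
        have hj : j < l.length := by
          simp only [List.length_cons, List.length_map] at hi; omega
        have hjm : j < (l.map some).length := by rwa [List.length_map]
        rw [List.getD_cons_succ, List.getD_eq_getElem _ _ hjm, List.getElem_map]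
        have hpre := prefix_VP φ hne hv m k
        have hjL : j < (LL φ v m (k + 1)).length := lt_of_lt_of_le hj hpre.length_le
        show some l[j] = yseq φ v m (j + 1)
        have : l[j] = wseq φ v m j := by
          rw [← List.getD_eq_getElem l default hj, ← getD_of_prefix hpre hj,
            wseq_spec φ hne hv m hjL]
        rw [this]; rfl

end Main

/-- Let `φ` be a substitution on `A` (with nonempty images), `v` a nonempty finite word
over `A`, and `m ≥ 1`. Then the one-sided sequence `v · φ^m(v) · φ^{2m}(v) · ⋯` is
substitutive: it is the image under the coding `♠ ↦ v₀, a ↦ a` of the fixed point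
`♠ v φ^m(v) φ^{2m}(v) ⋯` of the substitution `φ'` on `A ∪ {♠}` given by `φ'(♠) = ♠v`,
`φ'|_A = φ^m`. -/
theorem concat_powers_is_substitutive {A : Type*} [Inhabited A] (φ : A → List A)
    (hne : ∀ a, φ a ≠ []) (v : List A) (hv : v ≠ []) (m : ℕ) (hm : 1 ≤ m) :
    ∃ y : ℕ → Option A,
      y 0 = none ∧
      substNgen (spadeSubst φ v m) y = y ∧
      ∀ n : ℕ, (y (n + 1)).getD v.headI
        = ((List.range (n + 1)).flatMap (fun j => (substWord φ)^[j * m] v)).getD n default := concat_powers_is_substitutive' φ hne v hv m hm
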